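/- arXiv:2212.10045 — 5 statements merged into one kernel-verified Lean document; each statement's English description precedes it below -/
import Mathlib

section
/- For positive integers m, a, n, b with m ≥ 1, n ≥ 1, a ≥ 1, b ≥ 1: √((m+n+a+b)² + 1) − √((m+a+1)² + 1) > √((n+b+1)² + 1) − √(5). -/
set_option maxHeartbeats 1000000


theorem case1_ineq (m a n b : ℕ) (hm : 1 ≤ m) (ha : 1 ≤ a) (hn : 1 ≤ n) (hb : 1 ≤ b) :
    Real.sqrt (((n : ℝ) + b + 1) ^ 2 + 1) - Real.sqrt 5 <
      Real.sqrt (((m : ℝ) + n + a + b) ^ 2 + 1) - Real.sqrt (((m : ℝ) + a + 1) ^ 2 + 1) := by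
  have hm' : (1:ℝ) ≤ m := by exact_mod_cast hm
  have ha' : (1:ℝ) ≤ a := by exact_mod_cast ha
  have hn' : (1:ℝ) ≤ n := by exact_mod_cast hn
  have hb' : (1:ℝ) ≤ b := by exact_mod_cast hb
  set s : ℝ := (m:ℝ) + a with hsdef
  set t : ℝ := (n:ℝ) + b with htdef
  have hs : 2 ≤ s := by simp only [hsdef]; linarith
  have ht : 2 ≤ t := by simp only [htdef]; linarith
  have e1 : (m:ℝ) + n + a + b = s + t := by simp only [hsdef, htdef]; ring
  rw [e1]
  set A := Real.sqrt ((s + t) ^ 2 + 1) with hAdef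
  set B := Real.sqrt ((s + 1) ^ 2 + 1) with hBdef
  set C := Real.sqrt ((t + 1) ^ 2 + 1) with hCdef
  set D := Real.sqrt 5 with hDdef
  have hA0 : 0 ≤ A := Real.sqrt_nonneg _
  have hB0 : 0 ≤ B := Real.sqrt_nonneg _
  have hC0 : 0 ≤ C := Real.sqrt_nonneg _
  have hD0 : 0 ≤ D := Real.sqrt_nonneg _
  have hA2 : A ^ 2 = (s + t) ^ 2 + 1 := Real.sq_sqrt (by positivity)
  have hB2 : B ^ 2 = (s + 1) ^ 2 + 1 := Real.sq_sqrt (by positivity)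
  have hC2 : C ^ 2 = (t + 1) ^ 2 + 1 := Real.sq_sqrt (by positivity)
  have hD2 : D ^ 2 = 5 := Real.sq_sqrt (by norm_num)
  -- A*D > 2*(s+t)
  have hAD : 2 * (s + t) < A * D := by
    have h1 : A * D = Real.sqrt (((s + t) ^ 2 + 1) * 5) := by
      rw [hAdef, hDdef, ← Real.sqrt_mul (by positivity)]
    have h2 : 2 * (s + t) = Real.sqrt ((2 * (s + t)) ^ 2) := by
      rw [Real.sqrt_sq (by linarith)]
    rw [h1, h2]
    apply Real.sqrt_lt_sqrt (by positivity)
    nlinarith [sq_nonneg (s + t)]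
  -- B*C < A*D + (s-1)*(t-1)
  have hBC : B * C < A * D + (s - 1) * (t - 1) := by
    have hsq : (B * C) ^ 2 < (A * D + (s - 1) * (t - 1)) ^ 2 := by
      have hBC2 : (B * C) ^ 2 = ((s + 1) ^ 2 + 1) * ((t + 1) ^ 2 + 1) := by
        rw [mul_pow, hB2, hC2]
      have hAD2 : (A * D) ^ 2 = ((s + t) ^ 2 + 1) * 5 := by
        rw [mul_pow, hA2, hD2]
      have hP : (0:ℝ) < (s - 1) * (t - 1) :=
        mul_pos (by linarith) (by linarith)
      have hprod : 2 * (s + t) * ((s - 1) * (t - 1)) < A * D * ((s - 1) * (t - 1)) :=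
        mul_lt_mul_of_pos_right hAD hP
      nlinarith [hprod, hP, hBC2, hAD2]
    have hpos : 0 < A * D + (s - 1) * (t - 1) := by
      nlinarith
    nlinarith [mul_nonneg hB0 hC0]
  -- (A+D)^2 > (B+C)^2
  have hsum : (B + C) ^ 2 < (A + D) ^ 2 := by
    have key : A ^ 2 + D ^ 2 - B ^ 2 - C ^ 2 = 2 * (s - 1) * (t - 1) := by
      rw [hA2, hB2, hC2, hD2]; ring
    nlinarith [hBC]
  have hfin : B + C < A + D := lt_of_pow_lt_pow_left₀ 2 (by positivity) hsum
  linarith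
end

section
/- For positive integers m, n, a, b with m, n ≥ 1 and a, b ≥ 1, and reals D_x ≥ 2, D_y ≥ 2 with D_y > D_x: √((m+n+a+b)² + D_y²) + √(4 + D_x²) + √5 + √((m+n+a+b)² + 1) + √((m+n+a+b)² + 4) > √((m+a+1)² + D_x²) + √((n+b+1)² + D_y²) + √((n+b+1)² + 1) + √((m+a+1)² + 1) + √((n+b+1)² + 4). -/
lemma shift_sqrt_lemma (u v t c : ℝ) (hv : 0 ≤ v) (huv : v ≤ u) (ht : 0 ≤ t) (hc : 0 ≤ c) :
    Real.sqrt (u ^ 2 + c) - Real.sqrt (v ^ 2 + c) ≤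
      Real.sqrt ((u + t) ^ 2 + c) - Real.sqrt ((v + t) ^ 2 + c) := by
  set A := Real.sqrt ((u + t) ^ 2 + c) with hAdef
  set B := Real.sqrt (v ^ 2 + c) with hBdef
  set C := Real.sqrt ((v + t) ^ 2 + c) with hCdef
  set D := Real.sqrt (u ^ 2 + c) with hDdef
  have hA0 : 0 ≤ A := Real.sqrt_nonneg _
  have hB0 : 0 ≤ B := Real.sqrt_nonneg _
  have hC0 : 0 ≤ C := Real.sqrt_nonneg _
  have hD0 : 0 ≤ D := Real.sqrt_nonneg _
  have hA2 : A ^ 2 = (u + t) ^ 2 + c := Real.sq_sqrt (by positivity)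
  have hB2 : B ^ 2 = v ^ 2 + c := Real.sq_sqrt (by positivity)
  have hC2 : C ^ 2 = (v + t) ^ 2 + c := Real.sq_sqrt (by positivity)
  have hD2 : D ^ 2 = u ^ 2 + c := Real.sq_sqrt (by positivity)
  have htuv : 0 ≤ t * (u - v) := mul_nonneg ht (by linarith)
  -- Cauchy–Schwarz: A*B ≥ (u+t)*v + c
  have hAB : (u + t) * v + c ≤ A * B := by
    rw [hAdef, hBdef, ← Real.sqrt_mul (by positivity)]
    have h1 : ((u + t) * v + c) ^ 2 ≤ ((u + t) ^ 2 + c) * (v ^ 2 + c) := by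
      nlinarith [sq_nonneg ((u + t) - v), hc, mul_nonneg (sq_nonneg ((u+t) - v)) hc]
    have hnn : 0 ≤ (u + t) * v + c :=
      add_nonneg (mul_nonneg (by linarith) hv) hc
    calc (u + t) * v + c = Real.sqrt (((u + t) * v + c) ^ 2) :=
          (Real.sqrt_sq hnn).symm
      _ ≤ Real.sqrt (((u + t) ^ 2 + c) * (v ^ 2 + c)) := Real.sqrt_le_sqrt h1
  have hABsq : (A * B) ^ 2 = ((u + t) ^ 2 + c) * (v ^ 2 + c) := by
    rw [mul_pow, hA2, hB2]
  have hCDsq : (C * D) ^ 2 = ((v + t) ^ 2 + c) * (u ^ 2 + c) := by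
    rw [mul_pow, hC2, hD2]
  -- key : C*D ≤ t*(u-v) + A*B
  have hABnn : 0 ≤ A * B := mul_nonneg hA0 hB0
  have hR0 : 0 ≤ t * (u - v) + A * B := by linarith
  have h3 : 2 * (t * (u - v)) * ((u + t) * v + c) ≤ 2 * (t * (u - v)) * (A * B) := by
    apply mul_le_mul_of_nonneg_left hAB (by linarith)
  have hpoly : ((v + t) ^ 2 + c) * (u ^ 2 + c) ≤
      (t * (u - v)) ^ 2 + 2 * (t * (u - v)) * ((u + t) * v + c) + ((u + t) ^ 2 + c) * (v ^ 2 + c) := by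
    have hid : (t * (u - v)) ^ 2 + 2 * (t * (u - v)) * ((u + t) * v + c) +
        ((u + t) ^ 2 + c) * (v ^ 2 + c) - ((v + t) ^ 2 + c) * (u ^ 2 + c) =
        4 * (t * (u - v)) * c := by ring
    nlinarith [mul_nonneg htuv hc]
  have hsq : (C * D) ^ 2 ≤ (t * (u - v) + A * B) ^ 2 := by
    have expand : (t * (u - v) + A * B) ^ 2 =
        (t * (u - v)) ^ 2 + 2 * (t * (u - v)) * (A * B) + (A * B) ^ 2 := by ring
    rw [hCDsq, expand, hABsq]
    linarith [h3, hpoly]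
  have key : C * D ≤ t * (u - v) + A * B := by
    calc C * D = Real.sqrt ((C * D) ^ 2) :=
          (Real.sqrt_sq (mul_nonneg hC0 hD0)).symm
      _ ≤ Real.sqrt ((t * (u - v) + A * B) ^ 2) := Real.sqrt_le_sqrt hsq
      _ = t * (u - v) + A * B := Real.sqrt_sq hR0
  -- (C+D)^2 ≤ (A+B)^2
  have hfin : (C + D) ^ 2 ≤ (A + B) ^ 2 := by
    have h5 : (A + B) ^ 2 = A ^ 2 + B ^ 2 + 2 * (A * B) := by ring
    have h6 : (C + D) ^ 2 = C ^ 2 + D ^ 2 + 2 * (C * D) := by ring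
    have hq : (u + t) ^ 2 + v ^ 2 = (v + t) ^ 2 + u ^ 2 + 2 * (t * (u - v)) := by ring
    linarith [key, h5, h6, hA2, hB2, hC2, hD2, hq]
  have : C + D ≤ A + B := by
    calc C + D = Real.sqrt ((C + D) ^ 2) := (Real.sqrt_sq (by linarith)).symm
      _ ≤ Real.sqrt ((A + B) ^ 2) := Real.sqrt_le_sqrt hfin
      _ = A + B := Real.sqrt_sq (by linarith)
  linarith

lemma swap_sqrt_lemma (a b c d : ℝ) (hb : 0 ≤ b) (hba : b ≤ a) (hc : 0 ≤ c) (hcd : c ≤ d) :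
    Real.sqrt (a + d) + Real.sqrt (b + c) ≤ Real.sqrt (a + c) + Real.sqrt (b + d) := by
  have ha : 0 ≤ a := le_trans hb hba
  have hd : 0 ≤ d := le_trans hc hcd
  set A := Real.sqrt (a + c) with hAdef
  set B := Real.sqrt (b + d) with hBdef
  set C := Real.sqrt (a + d) with hCdef
  set D := Real.sqrt (b + c) with hDdef
  have hA0 : 0 ≤ A := Real.sqrt_nonneg _
  have hB0 : 0 ≤ B := Real.sqrt_nonneg _
  have hC0 : 0 ≤ C := Real.sqrt_nonneg _
  have hD0 : 0 ≤ D := Real.sqrt_nonneg _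
  have hA2 : A ^ 2 = a + c := Real.sq_sqrt (by positivity)
  have hB2 : B ^ 2 = b + d := Real.sq_sqrt (by positivity)
  have hC2 : C ^ 2 = a + d := Real.sq_sqrt (by positivity)
  have hD2 : D ^ 2 = b + c := Real.sq_sqrt (by positivity)
  have hprod : C * D ≤ A * B := by
    rw [hAdef, hBdef, hCdef, hDdef, ← Real.sqrt_mul (by positivity),
      ← Real.sqrt_mul (by positivity)]
    apply Real.sqrt_le_sqrt
    nlinarith [mul_nonneg (sub_nonneg.2 hba) (sub_nonneg.2 hcd)]
  have hfin : (C + D) ^ 2 ≤ (A + B) ^ 2 := by nlinarith [hprod]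
  calc C + D = Real.sqrt ((C + D) ^ 2) := (Real.sqrt_sq (by linarith)).symm
    _ ≤ Real.sqrt ((A + B) ^ 2) := Real.sqrt_le_sqrt hfin
    _ = A + B := Real.sqrt_sq (by linarith)

set_option maxHeartbeats 1000000 in
theorem subcase12_ineq (m n a b : ℕ) (hm : 1 ≤ m) (hn : 1 ≤ n) (ha : 1 ≤ a) (hb : 1 ≤ b)
    (Dx Dy : ℝ) (hDx : 2 ≤ Dx) (hDy : 2 ≤ Dy) (hxy : Dx < Dy) :
    Real.sqrt (((m : ℝ) + a + 1) ^ 2 + Dx ^ 2) + Real.sqrt (((n : ℝ) + b + 1) ^ 2 + Dy ^ 2) +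
        Real.sqrt (((n : ℝ) + b + 1) ^ 2 + 1) + Real.sqrt (((m : ℝ) + a + 1) ^ 2 + 1) +
        Real.sqrt (((n : ℝ) + b + 1) ^ 2 + 4) <
      Real.sqrt (((m : ℝ) + n + a + b) ^ 2 + Dy ^ 2) + Real.sqrt (4 + Dx ^ 2) + Real.sqrt 5 +
        Real.sqrt (((m : ℝ) + n + a + b) ^ 2 + 1) +
        Real.sqrt (((m : ℝ) + n + a + b) ^ 2 + 4) := by
  have hm1 : (1 : ℝ) ≤ (m : ℝ) := by exact_mod_cast hm
  have hn1 : (1 : ℝ) ≤ (n : ℝ) := by exact_mod_cast hn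
  have ha1 : (1 : ℝ) ≤ (a : ℝ) := by exact_mod_cast ha
  have hb1 : (1 : ℝ) ≤ (b : ℝ) := by exact_mod_cast hb
  set P : ℝ := (m : ℝ) + a + 1 with hP
  set Q : ℝ := (n : ℝ) + b + 1 with hQ
  set S : ℝ := (m : ℝ) + n + a + b with hS
  have hP3 : 3 ≤ P := by rw [hP]; linarith
  have hQ3 : 3 ≤ Q := by rw [hQ]; linarith
  have hSPQ : S = P + (Q - 2) := by rw [hS, hP, hQ]; ring
  have hQ2 : Q = 2 + (Q - 2) := by ring
  have ht : 0 ≤ Q - 2 := by linarith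
  -- shift lemma with c = 1
  have h1 := shift_sqrt_lemma P 2 (Q - 2) 1 (by norm_num) (by linarith) ht (by norm_num)
  rw [← hSPQ, ← hQ2] at h1
  norm_num at h1
  -- h1 : √(P^2+1) - √5 ≤ √(S^2+1) - √(Q^2+1)
  -- shift lemma with c = 4
  have h2 := shift_sqrt_lemma P 2 (Q - 2) 4 (by norm_num) (by linarith) ht (by norm_num)
  rw [← hSPQ, ← hQ2] at h2
  norm_num at h2
  -- h2 : √(P^2+4) - √8 ≤ √(S^2+4) - √(Q^2+4)
  -- c-monotonicity
  have hDx2 : (4 : ℝ) ≤ Dx ^ 2 := by nlinarith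
  have h3 := swap_sqrt_lemma (P ^ 2) 4 4 (Dx ^ 2) (by norm_num) (by nlinarith) (by norm_num) hDx2
  norm_num at h3
  -- h3 : √(P^2+Dx^2) + √8 ≤ √(P^2+4) + √(4+Dx^2)
  -- strict part
  have h4 : Real.sqrt (Q ^ 2 + Dy ^ 2) < Real.sqrt (S ^ 2 + Dy ^ 2) := by
    apply Real.sqrt_lt_sqrt (by positivity)
    have hQS : Q < S := by rw [hSPQ]; linarith
    have hQ0 : 0 ≤ Q := by linarith
    nlinarith
  linarith
end

section
/- For positive integers m, n, b with m, n ≥ 1, b ≥ 1 and a real D > 1: √(1 + D²) + √((m+n+b+1)² + 1) > √((m+1)² + D²) + √((n+b+1)² + 1). -/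
lemma sqrt_sum_le (x y z w : ℝ) (hx : 0 ≤ x) (hy : 0 ≤ y) (hz : 0 ≤ z) (hw : 0 ≤ w)
    (hsum : x + y ≤ z + w) (hprod : x * y ≤ z * w) :
    Real.sqrt x + Real.sqrt y ≤ Real.sqrt z + Real.sqrt w := by
  have hxy : Real.sqrt x * Real.sqrt y ≤ Real.sqrt z * Real.sqrt w := by
    rw [← Real.sqrt_mul hx, ← Real.sqrt_mul hz]
    exact Real.sqrt_le_sqrt hprod
  have h2 : (Real.sqrt x + Real.sqrt y) ^ 2 ≤ (Real.sqrt z + Real.sqrt w) ^ 2 := by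
    have := Real.sq_sqrt hx
    have := Real.sq_sqrt hy
    have := Real.sq_sqrt hz
    have := Real.sq_sqrt hw
    nlinarith
  have hzw : (0:ℝ) ≤ Real.sqrt z + Real.sqrt w := by positivity
  nlinarith [Real.sqrt_nonneg x, Real.sqrt_nonneg y]

lemma stepB (M s : ℝ) (hM : 1 ≤ M) (hs : 3 ≤ s) :
    Real.sqrt ((M + 1) ^ 2 + 1) + Real.sqrt (s ^ 2 + 1) <
      Real.sqrt 2 + Real.sqrt ((M + s) ^ 2 + 1) := by
  set p := (M + 1) ^ 2 + 1 with hp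
  set q := s ^ 2 + 1 with hq
  set r := (M + s) ^ 2 + 1 with hr
  have hp0 : (0:ℝ) ≤ p := by positivity
  have hq0 : (0:ℝ) ≤ q := by positivity
  have hr0 : (0:ℝ) ≤ r := by positivity
  set u := Real.sqrt (2 * r) with hu
  have hu0 : (0:ℝ) ≤ u := Real.sqrt_nonneg _
  have hu2 : u ^ 2 = 2 * r := Real.sq_sqrt (by positivity)
  have hulb : 1.41 * (M + s) < u := by
    apply lt_of_pow_lt_pow_left₀ 2 hu0
    rw [hu2]
    nlinarith
  -- key: sqrt(p*q) < M*(s-1) + u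
  have hkey : Real.sqrt (p * q) < M * (s - 1) + u := by
    rw [show M * (s - 1) + u = Real.sqrt ((M * (s - 1) + u) ^ 2) from
      (Real.sqrt_sq (by nlinarith)).symm]
    apply Real.sqrt_lt_sqrt (by positivity)
    have hexp : p * q = ((M+1)^2+1) * (s^2+1) := by rw [hp, hq]
    nlinarith [mul_pos (by nlinarith : (0:ℝ) < M * (s-1)) (sub_pos.mpr hulb)]
  have hmul : Real.sqrt p * Real.sqrt q = Real.sqrt (p * q) := (Real.sqrt_mul hp0 q).symm
  have hmul2 : Real.sqrt 2 * Real.sqrt r = u := by rw [hu, Real.sqrt_mul (by norm_num : (0:ℝ) ≤ 2)]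
  have h2 : (Real.sqrt p + Real.sqrt q) ^ 2 < (Real.sqrt 2 + Real.sqrt r) ^ 2 := by
    have e1 : Real.sqrt p ^ 2 = p := Real.sq_sqrt hp0
    have e2 : Real.sqrt q ^ 2 = q := Real.sq_sqrt hq0
    have e3 : Real.sqrt r ^ 2 = r := Real.sq_sqrt hr0
    have e4 : Real.sqrt 2 ^ 2 = (2:ℝ) := Real.sq_sqrt (by norm_num)
    have hrpq : r + 2 - (p + q) = 2 * M * (s - 1) := by rw [hp, hq, hr]; ring
    nlinarith [hkey, hmul, hmul2]
  exact lt_of_pow_lt_pow_left₀ 2 (by positivity) h2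

theorem case2_ineq (m n b : ℕ) (hm : 1 ≤ m) (hn : 1 ≤ n) (hb : 1 ≤ b) (D : ℝ) (hD : 1 < D) :
    Real.sqrt (((m : ℝ) + 1) ^ 2 + D ^ 2) + Real.sqrt (((n : ℝ) + b + 1) ^ 2 + 1) <
      Real.sqrt (1 + D ^ 2) + Real.sqrt (((m : ℝ) + n + b + 1) ^ 2 + 1) := by
  set M : ℝ := (m : ℝ) with hMdef
  set s : ℝ := (n : ℝ) + b + 1 with hsdef
  have hM : 1 ≤ M := by rw [hMdef]; exact_mod_cast hm
  have hs : 3 ≤ s := by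
    have : (1:ℝ) ≤ (n:ℝ) := by exact_mod_cast hn
    have : (1:ℝ) ≤ (b:ℝ) := by exact_mod_cast hb
    rw [hsdef]; linarith [show (1:ℝ) ≤ (n:ℝ) from by exact_mod_cast hn]
  have hD2 : 1 ≤ D ^ 2 := by nlinarith
  -- Step A
  have hA : Real.sqrt ((M + 1) ^ 2 + D ^ 2) + Real.sqrt (1 + 1) ≤
      Real.sqrt ((M + 1) ^ 2 + 1) + Real.sqrt (1 + D ^ 2) := by
    apply sqrt_sum_le _ _ _ _ (by positivity) (by norm_num) (by positivity) (by positivity)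
    · apply le_of_eq; ring
    · nlinarith [mul_nonneg (show (0:ℝ) ≤ (M+1)^2 - 1 by nlinarith) (show (0:ℝ) ≤ D^2 - 1 by nlinarith)]
  have h2 : Real.sqrt (1 + 1) = Real.sqrt 2 := by norm_num
  have hB := stepB M s hM hs
  have hMs : ((m : ℝ) + n + b + 1) = M + s := by rw [hMdef, hsdef]; ring
  rw [hMs]
  linarith [hA, hB, h2 ▸ hA]
end

section
/- For positive integers m, n with m, n ≥ 1 and a real D ≥ 2: √(1 + D²) + √((m+n+1)² + 4) > √((m+1)² + D²) + √((n+1)² + 4). -/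
lemma case3_poly (M N DS : ℝ) (hm : 1 ≤ M) (hn : 1 ≤ N) (hD2 : 4 ≤ DS) :
    ((M + 1) ^ 2 + DS) * ((N + 1) ^ 2 + 4) <
      M ^ 2 * N ^ 2 + 4 * M * N * (M + N + 1) + (1 + DS) * ((M + N + 1) ^ 2 + 4) := by
  nlinarith [mul_nonneg (by linarith : (0:ℝ) ≤ DS - 4)
      (mul_nonneg (by linarith : (0:ℝ) ≤ M) (by linarith : (0:ℝ) ≤ M + 2 * N + 2)),
    mul_pos (by linarith : (0:ℝ) < M) (by linarith : (0:ℝ) < N),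
    mul_nonneg (mul_nonneg (by linarith : (0:ℝ) ≤ M) (by linarith : (0:ℝ) ≤ N))
      (by linarith : (0:ℝ) ≤ M + N)]

lemma case3_aux (M N D p q r s : ℝ) (hm : 1 ≤ M) (hn : 1 ≤ N) (hD : 2 ≤ D)
    (hp2 : p ^ 2 = (M + 1) ^ 2 + D ^ 2) (hq2 : q ^ 2 = (N + 1) ^ 2 + 4)
    (hr2 : r ^ 2 = 1 + D ^ 2) (hs2 : s ^ 2 = (M + N + 1) ^ 2 + 4)
    (hp0 : 0 ≤ p) (hq0 : 0 ≤ q) (hr0 : 0 ≤ r) (hs0 : 0 ≤ s)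
    (hrs : D * (M + N + 1) ≤ r * s) : p + q < r + s := by
  have hD2 : (4:ℝ) ≤ D ^ 2 := by nlinarith
  have hpq2 : (p * q) ^ 2 = ((M + 1) ^ 2 + D ^ 2) * ((N + 1) ^ 2 + 4) := by
    rw [mul_pow, hp2, hq2]
  have hrs2 : (r * s) ^ 2 = (1 + D ^ 2) * ((M + N + 1) ^ 2 + 4) := by
    rw [mul_pow, hr2, hs2]
  have hT : 4 * M * N * (M + N + 1) ≤ 2 * M * N * (r * s) := by
    have h5 : 2 * (M + N + 1) ≤ D * (M + N + 1) :=
      mul_le_mul_of_nonneg_right hD (by linarith)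
    have h6 : 2 * (M + N + 1) ≤ r * s := le_trans h5 hrs
    have := mul_le_mul_of_nonneg_left h6 (by positivity : (0:ℝ) ≤ 2 * M * N)
    linarith
  have hpoly := case3_poly M N (D ^ 2) hm hn hD2
  have hkey2 : (p * q) ^ 2 < (M * N + r * s) ^ 2 := by
    have he : (M * N + r * s) ^ 2 = M ^ 2 * N ^ 2 + 2 * M * N * (r * s) + (r * s) ^ 2 := by
      ring
    rw [hpq2, he, hrs2]
    linarith
  have hkey : p * q < M * N + r * s := by
    refine lt_of_pow_lt_pow_left₀ 2 ?_ hkey2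
    have h8 : (0:ℝ) ≤ r * s := mul_nonneg hr0 hs0
    have h9 : (0:ℝ) ≤ M * N := mul_nonneg (by linarith) (by linarith)
    linarith
  have hsq : (p + q) ^ 2 < (r + s) ^ 2 := by
    have e1 : (p + q) ^ 2 = p ^ 2 + q ^ 2 + 2 * (p * q) := by ring
    have e2 : (r + s) ^ 2 = r ^ 2 + s ^ 2 + 2 * (r * s) := by ring
    rw [e1, e2, hp2, hq2, hr2, hs2]
    linarith [hkey]
  exact lt_of_pow_lt_pow_left₀ 2 (by linarith) hsq

theorem case3_ineq (m n : ℕ) (hm : 1 ≤ m) (hn : 1 ≤ n) (D : ℝ) (hD : 2 ≤ D) :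
    Real.sqrt (((m : ℝ) + 1) ^ 2 + D ^ 2) + Real.sqrt (((n : ℝ) + 1) ^ 2 + 4) <
      Real.sqrt (1 + D ^ 2) + Real.sqrt (((m : ℝ) + n + 1) ^ 2 + 4) := by
  have hm' : (1 : ℝ) ≤ m := by exact_mod_cast hm
  have hn' : (1 : ℝ) ≤ n := by exact_mod_cast hn
  have h1 : (0:ℝ) ≤ ((m : ℝ) + 1) ^ 2 + D ^ 2 := by positivity
  have h2 : (0:ℝ) ≤ ((n : ℝ) + 1) ^ 2 + 4 := by positivity
  have h3 : (0:ℝ) ≤ 1 + D ^ 2 := by positivity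
  have h4 : (0:ℝ) ≤ ((m : ℝ) + n + 1) ^ 2 + 4 := by positivity
  have hrD : D ≤ Real.sqrt (1 + D ^ 2) := by
    have : D = Real.sqrt (D ^ 2) := (Real.sqrt_sq (by linarith)).symm
    rw [this]
    exact Real.sqrt_le_sqrt (by nlinarith)
  have hsM : (m : ℝ) + n + 1 ≤ Real.sqrt (((m : ℝ) + n + 1) ^ 2 + 4) := by
    have h : (m : ℝ) + n + 1 = Real.sqrt (((m : ℝ) + n + 1) ^ 2) :=
      (Real.sqrt_sq (by linarith)).symm
    rw [h]
    exact Real.sqrt_le_sqrt (by nlinarith)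
  have hrs : D * ((m : ℝ) + n + 1) ≤
      Real.sqrt (1 + D ^ 2) * Real.sqrt (((m : ℝ) + n + 1) ^ 2 + 4) := by
    have := mul_le_mul hrD hsM (by linarith) (Real.sqrt_nonneg _)
    linarith
  exact case3_aux (m : ℝ) (n : ℝ) D _ _ _ _ hm' hn' hD
    (Real.sq_sqrt h1) (Real.sq_sqrt h2) (Real.sq_sqrt h3) (Real.sq_sqrt h4)
    (Real.sqrt_nonneg _) (Real.sqrt_nonneg _) (Real.sqrt_nonneg _) (Real.sqrt_nonneg _) hrs
end

section
/- For a tree T in which every support vertex's pendant neighbors are counted: if I is a maximum independent set of T containing all pendant vertices and u, v are adjacent non-pendant vertices not in I whose other neighbors u₁,…,u_m, v₁,…,v_n are support vertices with only pendant further neighbors, then α(T) = Σᵢ (d(uᵢ) − 1) + Σⱼ (d(vⱼ) − 1) + (number of pendant neighbors of u and v) + α(H), where H is the remaining component. -/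
/-- A finset of vertices is independent: no two of its vertices are adjacent. -/
def SimpleGraph.IsIndepFinset {V : Type*} (G : SimpleGraph V) (s : Finset V) : Prop :=
  ∀ a ∈ s, ∀ b ∈ s, ¬ G.Adj a b

open Classical in
/-- The independence number of a graph on a finite vertex type. -/
noncomputable def SimpleGraph.indepNumFin {V : Type*} [Fintype V] (G : SimpleGraph V) : ℕ :=
  Nat.findGreatest (fun k => ∃ s : Finset V, G.IsIndepFinset s ∧ s.card = k) (Fintype.card V)

open Classical in
lemma indep_card_le_indepNum {V : Type*} [Fintype V] (G : SimpleGraph V) (s : Finset V)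
    (h : G.IsIndepFinset s) : s.card ≤ G.indepNumFin :=
  Nat.le_findGreatest (Finset.card_le_univ s) ⟨s, h, rfl⟩

open Classical in
lemma exists_max_indep {V : Type*} [Fintype V] (G : SimpleGraph V) :
    ∃ s : Finset V, G.IsIndepFinset s ∧ s.card = G.indepNumFin :=
  Nat.findGreatest_spec (P := fun k => ∃ s : Finset V, G.IsIndepFinset s ∧ s.card = k)
    (Nat.zero_le _) ⟨∅, fun a ha => absurd ha (by simp), rfl⟩

lemma tree_no_triangle {V : Type*} (T : SimpleGraph V) (hT : T.IsTree) {a b c : V}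
    (hab : T.Adj a b) (hbc : T.Adj b c) (hac : T.Adj a c) : False := by
  obtain ⟨-, huniq⟩ := SimpleGraph.isTree_iff_existsUnique_path.mp hT
  obtain ⟨p, -, hp⟩ := huniq a c
  have h1 : (SimpleGraph.Walk.cons hac SimpleGraph.Walk.nil).IsPath := by
    simp [SimpleGraph.Walk.cons_isPath_iff, hac.ne]
  have h2 : (SimpleGraph.Walk.cons hab (SimpleGraph.Walk.cons hbc SimpleGraph.Walk.nil)).IsPath := by
    simp [SimpleGraph.Walk.cons_isPath_iff, hab.ne, hac.ne, hbc.ne]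
  have := (hp _ h1).trans (hp _ h2).symm
  have hlen := congrArg SimpleGraph.Walk.length this
  simp at hlen

lemma pendant_unique_nbr {V : Type*} [Fintype V] [DecidableEq V] (T : SimpleGraph V)
    [DecidableRel T.Adj] {p a b : V} (hp : T.degree p = 1) (ha : T.Adj p a) (hb : T.Adj p b) :
    a = b := by
  obtain ⟨c, hc⟩ := Finset.card_eq_one.mp hp
  have h1 : a ∈ T.neighborFinset p := by simpa using ha
  have h2 : b ∈ T.neighborFinset p := by simpa using hb
  rw [hc, Finset.mem_singleton] at h1 h2
  rw [h1, h2]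

/-- Counting identity for the independence number used in Case 1 of Lemma 3.2:
if `I` is a maximum independent set of a tree `T` containing all pendant vertices, and
`u, v` are adjacent non-pendant vertices not in `I` whose other non-pendant neighbors
(`Su` and `Sv`) are support vertices all of whose further neighbors are pendant, then
`α(T) = Σ_{w ∈ Su} (d(w)-1) + Σ_{w ∈ Sv} (d(w)-1) + (#pendant neighbors of u and v) + α(H)`,
where `H` is the remaining component (the induced subgraph on the vertices not covered). -/
theorem indepNum_counting_identity {V : Type*} [Fintype V] [DecidableEq V]
    (T : SimpleGraph V) [DecidableRel T.Adj] (hT : T.IsTree)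
    (I : Finset V) (hI : T.IsIndepFinset I) (hIcard : I.card = T.indepNumFin)
    (hIpend : ∀ w : V, T.degree w = 1 → w ∈ I)
    (u v : V) (huv : T.Adj u v) (hu : 2 ≤ T.degree u) (hv : 2 ≤ T.degree v)
    (huI : u ∉ I) (hvI : v ∉ I)
    (Su Sv Pu Pv : Finset V)
    (hSu : Su = (T.neighborFinset u).filter (fun w => w ≠ v ∧ 2 ≤ T.degree w))
    (hSv : Sv = (T.neighborFinset v).filter (fun w => w ≠ u ∧ 2 ≤ T.degree w))
    (hPu : Pu = (T.neighborFinset u).filter (fun w => T.degree w = 1))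
    (hPv : Pv = (T.neighborFinset v).filter (fun w => T.degree w = 1))
    (hSuSupp : ∀ w ∈ Su, ∀ z : V, T.Adj w z → z ≠ u → T.degree z = 1)
    (hSvSupp : ∀ w ∈ Sv, ∀ z : V, T.Adj w z → z ≠ v → T.degree z = 1)
    (R : Set V)
    (hR : R = {x : V | x ≠ u ∧ x ≠ v ∧ ¬ T.Adj u x ∧ ¬ T.Adj v x ∧
      ∀ w ∈ Su ∪ Sv, ¬ T.Adj w x})
    [Fintype R] :
    T.indepNumFin =
      (∑ w ∈ Su, (T.degree w - 1)) + (∑ w ∈ Sv, (T.degree w - 1)) +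
        (Pu.card + Pv.card) + (T.induce R).indepNumFin := by
  classical
  -- membership characterizations
  have hSu' : ∀ w, w ∈ Su ↔ T.Adj u w ∧ w ≠ v ∧ 2 ≤ T.degree w := by
    intro w; rw [hSu]; simp [SimpleGraph.mem_neighborFinset]
  have hSv' : ∀ w, w ∈ Sv ↔ T.Adj v w ∧ w ≠ u ∧ 2 ≤ T.degree w := by
    intro w; rw [hSv]; simp [SimpleGraph.mem_neighborFinset]
  have hPu' : ∀ w, w ∈ Pu ↔ T.Adj u w ∧ T.degree w = 1 := by
    intro w; rw [hPu]; simp [SimpleGraph.mem_neighborFinset]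
  have hPv' : ∀ w, w ∈ Pv ↔ T.Adj v w ∧ T.degree w = 1 := by
    intro w; rw [hPv]; simp [SimpleGraph.mem_neighborFinset]
  have hR' : ∀ x, x ∈ R ↔ (x ≠ u ∧ x ≠ v ∧ ¬ T.Adj u x ∧ ¬ T.Adj v x ∧
      ∀ w ∈ Su ∪ Sv, ¬ T.Adj w x) := by
    intro x; rw [hR]; simp [Set.mem_setOf_eq]
  -- the pendant leaves hanging off support vertices
  set Lw : V → Finset V := fun w => (T.neighborFinset w).filter (fun z => T.degree z = 1)
    with hLw
  have hLw' : ∀ w z, z ∈ Lw w ↔ T.Adj w z ∧ T.degree z = 1 := by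
    intro w z; simp [hLw, SimpleGraph.mem_neighborFinset]
  set L : Finset V := (Su ∪ Sv).biUnion Lw with hL
  set K : Finset V := Pu ∪ Pv ∪ L with hK
  have hKmem : ∀ p, p ∈ K ↔ p ∈ Pu ∨ p ∈ Pv ∨ ∃ w ∈ Su ∪ Sv, p ∈ Lw w := by
    intro p; simp [hK, hL, Finset.mem_union, Finset.mem_biUnion, or_assoc]
  -- every element of K is pendant
  have hKdeg : ∀ p ∈ K, T.degree p = 1 := by
    intro p hp
    rcases (hKmem p).mp hp with h | h | ⟨w, _, h⟩
    · exact ((hPu' p).mp h).2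
    · exact ((hPv' p).mp h).2
    · exact ((hLw' w p).mp h).2
  -- every element of K has a neighbor in {u,v} ∪ Su ∪ Sv
  have hKnbr : ∀ p ∈ K, ∃ q, T.Adj p q ∧ (q = u ∨ q = v ∨ q ∈ Su ∪ Sv) := by
    intro p hp
    rcases (hKmem p).mp hp with h | h | ⟨w, hw, h⟩
    · exact ⟨u, ((hPu' p).mp h).1.symm, Or.inl rfl⟩
    · exact ⟨v, ((hPv' p).mp h).1.symm, Or.inr (Or.inl rfl)⟩
    · exact ⟨w, ((hLw' w p).mp h).1.symm, Or.inr (Or.inr hw)⟩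
  -- every vertex in {u,v} ∪ Su ∪ Sv has degree ≥ 2
  have hbig : ∀ q, (q = u ∨ q = v ∨ q ∈ Su ∪ Sv) → 2 ≤ T.degree q := by
    intro q hq
    rcases hq with rfl | rfl | hq
    · exact hu
    · exact hv
    · rcases Finset.mem_union.mp hq with h | h
      · exact ((hSu' q).mp h).2.2
      · exact ((hSv' q).mp h).2.2
  -- any neighbor of an element of K is its unique neighbor
  have hKadj : ∀ p ∈ K, ∀ x, T.Adj p x → (x = u ∨ x = v ∨ x ∈ Su ∪ Sv) := by
    intro p hp x hx
    obtain ⟨q, hq, hq'⟩ := hKnbr p hp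
    have := pendant_unique_nbr T (hKdeg p hp) hx hq
    exact this ▸ hq'
  -- K is independent
  have hKindep : T.IsIndepFinset K := by
    intro a ha b hb hab
    have h2 := hbig b (hKadj a ha b hab)
    have h1 := hKdeg b hb
    omega
  -- K ⊆ I
  have hKI : K ⊆ I := fun p hp => hIpend p (hKdeg p hp)
  -- K is disjoint from R
  have hKR : ∀ p ∈ K, p ∉ R := by
    intro p hp hpR
    obtain ⟨q, hq, hq'⟩ := hKnbr p hp
    obtain ⟨_, _, h1, h2, h3⟩ := (hR' p).mp hpR
    rcases hq' with rfl | rfl | hq'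
    · exact h1 hq.symm
    · exact h2 hq.symm
    · exact h3 q hq' hq.symm
  -- Su and Sv are disjoint (no triangle in a tree)
  have hSuSv : Disjoint Su Sv := by
    rw [Finset.disjoint_left]
    intro w h1 h2
    exact tree_no_triangle T hT huv ((hSv' w).mp h2).1 ((hSu' w).mp h1).1
  -- cardinality of the leaf sets
  have hLwSu : ∀ w ∈ Su, Lw w = (T.neighborFinset w).erase u := by
    intro w hw
    ext z
    simp only [hLw', Finset.mem_erase, SimpleGraph.mem_neighborFinset]
    constructor
    · rintro ⟨h1, h2⟩
      refine ⟨?_, h1⟩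
      rintro rfl; omega
    · rintro ⟨h1, h2⟩
      exact ⟨h2, hSuSupp w hw z h2 h1⟩
  have hLwSv : ∀ w ∈ Sv, Lw w = (T.neighborFinset w).erase v := by
    intro w hw
    ext z
    simp only [hLw', Finset.mem_erase, SimpleGraph.mem_neighborFinset]
    constructor
    · rintro ⟨h1, h2⟩
      refine ⟨?_, h1⟩
      rintro rfl; omega
    · rintro ⟨h1, h2⟩
      exact ⟨h2, hSvSupp w hw z h2 h1⟩
  have hLwcardSu : ∀ w ∈ Su, (Lw w).card = T.degree w - 1 := by
    intro w hw
    rw [hLwSu w hw, Finset.card_erase_of_mem (by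
      rw [SimpleGraph.mem_neighborFinset]; exact ((hSu' w).mp hw).1.symm)]
    rfl
  have hLwcardSv : ∀ w ∈ Sv, (Lw w).card = T.degree w - 1 := by
    intro w hw
    rw [hLwSv w hw, Finset.card_erase_of_mem (by
      rw [SimpleGraph.mem_neighborFinset]; exact ((hSv' w).mp hw).1.symm)]
    rfl
  have hLcard : L.card = (∑ w ∈ Su, (T.degree w - 1)) + (∑ w ∈ Sv, (T.degree w - 1)) := by
    rw [hL, Finset.card_biUnion]
    · rw [Finset.sum_union hSuSv]
      congr 1
      · exact Finset.sum_congr rfl hLwcardSu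
      · exact Finset.sum_congr rfl hLwcardSv
    · intro w _ w' _ hne
      rw [Function.onFun, Finset.disjoint_left]
      intro z h1 h2
      obtain ⟨hz1, hz2⟩ := (hLw' w z).mp h1
      obtain ⟨hz1', _⟩ := (hLw' w' z).mp h2
      exact hne (pendant_unique_nbr T hz2 hz1.symm hz1'.symm)
  -- Pu, Pv, L are pairwise disjoint
  have hPuPv : Disjoint Pu Pv := by
    rw [Finset.disjoint_left]
    intro p h1 h2
    obtain ⟨ha, hd⟩ := (hPu' p).mp h1
    obtain ⟨hb, -⟩ := (hPv' p).mp h2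
    exact huv.ne (pendant_unique_nbr T hd ha.symm hb.symm)
  have hPuPvL : Disjoint (Pu ∪ Pv) L := by
    rw [Finset.disjoint_left]
    intro p h1 h2
    obtain ⟨w, hw, hpw⟩ := Finset.mem_biUnion.mp h2
    obtain ⟨hz1, hz2⟩ := (hLw' w p).mp hpw
    rcases Finset.mem_union.mp h1 with h | h
    · obtain ⟨ha, hd⟩ := (hPu' p).mp h
      have : u = w := pendant_unique_nbr T hd ha.symm hz1.symm
      rcases Finset.mem_union.mp hw with h' | h'
      · exact T.loopless.irrefl u (this ▸ ((hSu' w).mp h').1)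
      · exact ((hSv' w).mp h').2.1 this.symm
    · obtain ⟨ha, hd⟩ := (hPv' p).mp h
      have : v = w := pendant_unique_nbr T hd ha.symm hz1.symm
      rcases Finset.mem_union.mp hw with h' | h'
      · exact ((hSu' w).mp h').2.1 this.symm
      · exact T.loopless.irrefl v (this ▸ ((hSv' w).mp h').1)
  have hKcard : K.card = (∑ w ∈ Su, (T.degree w - 1)) + (∑ w ∈ Sv, (T.degree w - 1)) +
      (Pu.card + Pv.card) := by
    rw [hK, Finset.card_union_of_disjoint hPuPvL, Finset.card_union_of_disjoint hPuPv, hLcard]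
    ring
  -- vertices of I outside K lie in R
  have hIKR : ∀ x ∈ I, x ∉ K → x ∈ R := by
    intro x hxI hxK
    have hxu : x ≠ u := fun h => huI (h ▸ hxI)
    have hxv : x ≠ v := fun h => hvI (h ▸ hxI)
    have keynbr : ∀ y, T.Adj y x → (y = u ∨ y = v ∨ y ∈ Su ∪ Sv) → False := by
      -- x is adjacent to a "big" vertex y; show contradiction
      intro y hyx hy
      -- first, x cannot be pendant neighbor of u or v or support vertex? handle cases
      rcases hy with rfl | rfl | hy
      · -- y = u : x ∈ N(u)
        have hdx : 1 ≤ T.degree x := by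
          rw [← SimpleGraph.card_neighborFinset_eq_degree]
          exact Finset.card_pos.mpr ⟨y, by rw [SimpleGraph.mem_neighborFinset]; exact hyx.symm⟩
        rcases Nat.lt_or_ge (T.degree x) 2 with h2 | h2
        · have : T.degree x = 1 := by omega
          exact hxK ((hKmem x).mpr (Or.inl ((hPu' x).mpr ⟨hyx, this⟩)))
        · have hxSu : x ∈ Su := (hSu' x).mpr ⟨hyx, hxv, h2⟩
          -- x has a pendant neighbor z ∈ L ⊆ I, contradicting independence
          have : (Lw x).Nonempty := by
            rw [← Finset.card_pos, hLwcardSu x hxSu]; omega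
          obtain ⟨z, hz⟩ := this
          have hzL : z ∈ K := (hKmem z).mpr (Or.inr (Or.inr ⟨x, Finset.mem_union_left _ hxSu, hz⟩))
          exact hI x hxI z (hKI hzL) ((hLw' x z).mp hz).1
      · -- y = v
        have hdx : 1 ≤ T.degree x := by
          rw [← SimpleGraph.card_neighborFinset_eq_degree]
          exact Finset.card_pos.mpr ⟨y, by rw [SimpleGraph.mem_neighborFinset]; exact hyx.symm⟩
        rcases Nat.lt_or_ge (T.degree x) 2 with h2 | h2
        · have : T.degree x = 1 := by omega
          exact hxK ((hKmem x).mpr (Or.inr (Or.inl ((hPv' x).mpr ⟨hyx, this⟩))))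
        · have hxSv : x ∈ Sv := (hSv' x).mpr ⟨hyx, hxu, h2⟩
          have : (Lw x).Nonempty := by
            rw [← Finset.card_pos, hLwcardSv x hxSv]; omega
          obtain ⟨z, hz⟩ := this
          have hzL : z ∈ K := (hKmem z).mpr (Or.inr (Or.inr ⟨x, Finset.mem_union_right _ hxSv, hz⟩))
          exact hI x hxI z (hKI hzL) ((hLw' x z).mp hz).1
      · -- y ∈ Su ∪ Sv : x is a pendant leaf of y, so x ∈ L ⊆ K
        rcases Finset.mem_union.mp hy with h | h
        · have hxu' : x ≠ u := hxu
          have hdx : T.degree x = 1 := hSuSupp y h x hyx hxu'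
          exact hxK ((hKmem x).mpr (Or.inr (Or.inr ⟨y, Finset.mem_union_left _ h, (hLw' y x).mpr ⟨hyx, hdx⟩⟩)))
        · have hdx : T.degree x = 1 := hSvSupp y h x hyx hxv
          exact hxK ((hKmem x).mpr (Or.inr (Or.inr ⟨y, Finset.mem_union_right _ h, (hLw' y x).mpr ⟨hyx, hdx⟩⟩)))
    refine (hR' x).mpr ⟨hxu, hxv, ?_, ?_, ?_⟩
    · exact fun h => keynbr u h (Or.inl rfl)
    · exact fun h => keynbr v h (Or.inr (Or.inl rfl))
    · exact fun w hw h => keynbr w h (Or.inr (Or.inr hw))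
  -- Direction ≤
  have hle : T.indepNumFin ≤ (∑ w ∈ Su, (T.degree w - 1)) + (∑ w ∈ Sv, (T.degree w - 1)) +
      (Pu.card + Pv.card) + (T.induce R).indepNumFin := by
    have hsplit : (I \ K).card + K.card = I.card := Finset.card_sdiff_add_card_eq_card hKI
    -- embed I \ K into R
    set s₁ : Finset ↥R := (I \ K).subtype (fun x => x ∈ R) with hs₁
    have hs₁card : s₁.card = (I \ K).card := by
      rw [hs₁, Finset.card_subtype, Finset.filter_true_of_mem]
      intro x hx
      exact hIKR x (Finset.mem_sdiff.mp hx).1 (Finset.mem_sdiff.mp hx).2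
    have hs₁indep : (T.induce R).IsIndepFinset s₁ := by
      intro a ha b hb hab
      have ha' : (a : V) ∈ I \ K := by
        have := Finset.mem_subtype.mp ha; exact this
      have hb' : (b : V) ∈ I \ K := Finset.mem_subtype.mp hb
      have : T.Adj (a : V) (b : V) := hab
      exact hI a (Finset.mem_sdiff.mp ha').1 b (Finset.mem_sdiff.mp hb').1 this
    have h1 : (I \ K).card ≤ (T.induce R).indepNumFin := by
      rw [← hs₁card]
      exact indep_card_le_indepNum _ _ hs₁indep
    calc T.indepNumFin = I.card := hIcard.symm
      _ = (I \ K).card + K.card := hsplit.symm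
      _ ≤ (T.induce R).indepNumFin + K.card := by omega
      _ = _ := by rw [hKcard]; ring
  -- Direction ≥
  have hge : (∑ w ∈ Su, (T.degree w - 1)) + (∑ w ∈ Sv, (T.degree w - 1)) +
      (Pu.card + Pv.card) + (T.induce R).indepNumFin ≤ T.indepNumFin := by
    obtain ⟨J, hJindep, hJcard⟩ := exists_max_indep (T.induce R)
    set J' : Finset V := J.map ⟨Subtype.val, Subtype.val_injective⟩ with hJ'
    have hJ'R : ∀ x ∈ J', x ∈ R := by
      intro x hx
      obtain ⟨a, -, rfl⟩ := Finset.mem_map.mp hx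
      exact a.2
    have hJ'K : Disjoint J' K := by
      rw [Finset.disjoint_left]
      intro p h1 h2
      exact hKR p h2 (hJ'R p h1)
    have hSindep : T.IsIndepFinset (J' ∪ K) := by
      intro a ha b hb hab
      rcases Finset.mem_union.mp hb with hbJ | hbK
      · rcases Finset.mem_union.mp ha with haJ | haK
        · -- both in J'
          obtain ⟨a', ha', rfl⟩ := Finset.mem_map.mp haJ
          obtain ⟨b', hb', rfl⟩ := Finset.mem_map.mp hbJ
          exact hJindep a' ha' b' hb' hab
        · -- a ∈ K, b ∈ J' : b is the unique neighbor of a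
          have := hKadj a haK b hab
          obtain ⟨hbu, hbv, h1, h2, h3⟩ := (hR' b).mp (hJ'R b hbJ)
          rcases this with rfl | rfl | hb'
          · exact hbu rfl
          · exact hbv rfl
          · rcases Finset.mem_union.mp hb' with h | h
            · exact h1 ((hSu' b).mp h).1
            · exact h2 ((hSv' b).mp h).1
      · rcases Finset.mem_union.mp ha with haJ | haK
        · -- b ∈ K, a ∈ J'
          have := hKadj b hbK a hab.symm
          obtain ⟨hau, hav, h1, h2, h3⟩ := (hR' a).mp (hJ'R a haJ)
          rcases this with rfl | rfl | ha'
          · exact hau rfl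
          · exact hav rfl
          · rcases Finset.mem_union.mp ha' with h | h
            · exact h1 ((hSu' a).mp h).1
            · exact h2 ((hSv' a).mp h).1
        · exact hKindep a haK b hbK hab
    have hScard : (J' ∪ K).card = J.card + K.card := by
      rw [Finset.card_union_of_disjoint hJ'K, Finset.card_map]
    have := indep_card_le_indepNum T (J' ∪ K) hSindep
    rw [hScard, hJcard, hKcard] at this
    omega
  omega
end
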